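/- arXiv:1807.00616 — 2 statements merged into one kernel-verified Lean document; each statement's English description precedes it below -/
import Mathlib

section
/- Let n ∈ ℕ. If X = Y_0 ∪ Y_1 ⊆ ℕ is a finite set which is ω^n·2-large and exp-sparse, then Y_0 is ω^n-large or Y_1 is ω^n-large. -/
/- Ordinals `α < ω^ω` are represented in Cantor normal form as the list of their
exponents in nonincreasing order: `[n₀, n₁, …, n_{k-1}]` codes `ω^{n₀} + ⋯ + ω^{n_{k-1}}`,
and such a list is a valid Cantor normal form when it is sorted w.r.t. `≥`. -/

/-- The Ketonen–Solovay operation `α[m]`: `0[m] = 0`; `α[m] = β` if `α = β + 1`;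
`α[m] = β + ω^(n-1)·m` if `α = β + ω^n` with `n ≥ 1`. -/
def KSstep : List ℕ → ℕ → List ℕ
  | [], _ => []
  | [0], _ => []
  | [Nat.succ n], m => List.replicate m n
  | a :: b :: l, m => a :: KSstep (b :: l) m

/-- A finite set `X = {x₀ < ⋯ < x_{ℓ-1}} ⊆ ℕ` is `α`-large if `α[x₀][x₁]⋯[x_{ℓ-1}| = 0`. -/
def IsLarge (α : List ℕ) (X : Finset ℕ) : Prop :=
  (X.sort (· ≤ ·)).foldl KSstep α = []

/-- A finite set `X ⊆ ℕ` (with `min X ≥ 3`) is exp-sparse if for all `x, y ∈ X`,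
`x < y` implies `4^x < y`. -/
def ExpSparse (X : Finset ℕ) : Prop :=
  (∀ x ∈ X, 3 ≤ x) ∧ ∀ x ∈ X, ∀ y ∈ X, x < y → 4 ^ x < y

/-- A finite set `X ⊆ ℕ` is `α`-sparse if for all `x, y ∈ X` with `x < y`,
the interval `(x, y]` is `α`-large. -/
def SparseFor (α : List ℕ) (X : Finset ℕ) : Prop :=
  ∀ x ∈ X, ∀ y ∈ X, x < y → IsLarge α (Finset.Ioc x y)

namespace KSaux

lemma ks_nil (m : ℕ) : KSstep [] m = [] := rfl
lemma ks_zero (m : ℕ) : KSstep [0] m = [] := rfl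
lemma ks_succ (n m : ℕ) : KSstep [n+1] m = List.replicate m n := rfl
lemma ks_cons (a b : ℕ) (l : List ℕ) (m : ℕ) :
    KSstep (a :: b :: l) m = a :: KSstep (b :: l) m := by simp [KSstep]

lemma ks_cons' (a : ℕ) (l : List ℕ) (hl : l ≠ []) (m : ℕ) :
    KSstep (a :: l) m = a :: KSstep l m := by
  cases l with
  | nil => exact absurd rfl hl
  | cons b t => exact ks_cons a b t m

lemma ks_append (γ δ : List ℕ) (hδ : δ ≠ []) (m : ℕ) :
    KSstep (γ ++ δ) m = γ ++ KSstep δ m := by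
  induction γ with
  | nil => simp
  | cons a γ ih =>
    cases h : γ ++ δ with
    | nil => exact absurd (List.append_eq_nil_iff.mp h).2 hδ
    | cons c l =>
      show KSstep (a :: (γ ++ δ)) m = _
      rw [h, ks_cons, ← h, ih]
      rfl

lemma fold_nil_init (l : List ℕ) : List.foldl KSstep [] l = [] := by
  induction l with
  | nil => rfl
  | cons x l ih => simpa [List.foldl_cons, ks_nil] using ih

lemma fold_split (l : List ℕ) : ∀ γ δ : List ℕ, List.foldl KSstep (γ ++ δ) l = [] →
    ∃ l₁ l₂, l = l₁ ++ l₂ ∧ List.foldl KSstep δ l₁ = [] ∧ List.foldl KSstep γ l₂ = [] := by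
  induction l with
  | nil =>
    intro γ δ h
    rw [List.foldl_nil] at h
    exact ⟨[], [], rfl, (List.append_eq_nil_iff.mp h).2, (List.append_eq_nil_iff.mp h).1⟩
  | cons x l ih =>
    intro γ δ h
    by_cases hδ : δ = []
    · subst hδ
      refine ⟨[], x :: l, rfl, rfl, ?_⟩
      simpa using h
    · rw [List.foldl_cons, ks_append γ δ hδ] at h
      obtain ⟨l₁, l₂, rfl, h1, h2⟩ := ih γ (KSstep δ x) h
      exact ⟨x :: l₁, l₂, rfl, by simpa [List.foldl_cons] using h1, h2⟩

lemma ks_rep_zero (k m : ℕ) : KSstep (List.replicate (m+1) k) 0 = List.replicate m k := by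
  induction m with
  | zero =>
    cases k with
    | zero => rfl
    | succ n => rfl
  | succ m ih =>
    have h : List.replicate (m+2) k = k :: List.replicate (m+1) k := List.replicate_succ ..
    rw [h, ks_cons' k _ (by simp), ih, ← List.replicate_succ]

lemma ks_rep_zero' (m x : ℕ) : KSstep (List.replicate (m+1) 0) x = List.replicate m 0 := by
  induction m with
  | zero => rfl
  | succ m ih =>
    have h : List.replicate (m+2) 0 = 0 :: List.replicate (m+1) 0 := List.replicate_succ ..
    rw [h, ks_cons' 0 _ (by simp), ih, ← List.replicate_succ]

lemma iter_rep (n : ℕ) : ∀ i y : ℕ, i ≤ y →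
    (fun β => KSstep β 0)^[i] (List.replicate y n) = List.replicate (y - i) n := by
  intro i
  induction i with
  | zero => intro y _; simp
  | succ i ih =>
    intro y hy
    obtain ⟨y', rfl⟩ : ∃ y', y = y' + 1 := ⟨y - 1, by omega⟩
    rw [Function.iterate_succ_apply]
    have h : KSstep (List.replicate (y'+1) n) 0 = List.replicate y' n := ks_rep_zero n y'
    show (fun β => KSstep β 0)^[i] (KSstep (List.replicate (y'+1) n) 0) = _
    rw [h, ih y' (by omega)]
    congr 1
    omega

lemma iter_cons (a : ℕ) : ∀ (j : ℕ) (δ : List ℕ), (∀ i < j, (fun β => KSstep β 0)^[i] δ ≠ []) →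
    ∀ i ≤ j, (fun β => KSstep β 0)^[i] (a :: δ) = a :: (fun β => KSstep β 0)^[i] δ := by
  intro j
  induction j with
  | zero =>
    intro δ _ i hi
    interval_cases i
    simp
  | succ j ih =>
    intro δ hne i hij
    cases i with
    | zero => simp
    | succ i =>
      rw [Function.iterate_succ_apply, Function.iterate_succ_apply]
      have hδ : δ ≠ [] := hne 0 (by omega)
      have hstep : KSstep (a :: δ) 0 = a :: KSstep δ 0 := ks_cons' a δ hδ 0
      show (fun β => KSstep β 0)^[i] (KSstep (a :: δ) 0) = a :: (fun β => KSstep β 0)^[i] (KSstep δ 0)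
      rw [hstep]
      refine ih (KSstep δ 0) ?_ i (by omega)
      intro i' hi'
      have h2 := hne (i'+1) (by omega)
      rwa [Function.iterate_succ_apply] at h2

lemma R1 (α : List ℕ) (x y : ℕ) (hxy : x ≤ y) :
    ∃ j, (∀ i < j, (fun β => KSstep β 0)^[i] (KSstep α y) ≠ []) ∧
      KSstep α x = (fun β => KSstep β 0)^[j] (KSstep α y) := by
  induction α with
  | nil => exact ⟨0, by simp, rfl⟩
  | cons a α ih =>
    cases α with
    | nil =>
      cases a with
      | zero => exact ⟨0, by simp, rfl⟩
      | succ n =>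
        refine ⟨y - x, ?_, ?_⟩
        · intro i hi
          rw [ks_succ, iter_rep n i y (by omega)]
          have : y - i ≠ 0 := by omega
          simp [this]
        · rw [ks_succ, ks_succ, iter_rep n (y-x) y (by omega)]
          congr 1
          omega
    | cons b l =>
      obtain ⟨j, hne, heq⟩ := ih
      refine ⟨j, ?_, ?_⟩
      · intro i hi
        rw [ks_cons, iter_cons a j (KSstep (b::l) y) hne i (le_of_lt hi)]
        simp
      · rw [ks_cons, ks_cons, iter_cons a j (KSstep (b::l) y) hne j le_rfl, heq]

lemma insert_step : ∀ (l : List ℕ), l.Pairwise (· ≤ ·) → ∀ (α : List ℕ) (x : ℕ),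
    (∀ z ∈ l, x ≤ z) → List.foldl KSstep α l = [] →
    List.foldl KSstep (KSstep α x) l = [] := by
  intro l
  induction l with
  | nil =>
    intro _ α x _ h
    rw [List.foldl_nil] at h
    subst h
    rfl
  | cons y l ih =>
    intro hsort α x hx h
    have hsort' := List.pairwise_cons.mp hsort
    rw [List.foldl_cons] at h ⊢
    obtain ⟨j, hne, heq⟩ := R1 α x y (hx y (by simp))
    have chain : ∀ i, List.foldl KSstep ((fun β => KSstep β 0)^[i] (KSstep α y)) l = [] := by
      intro i
      induction i with
      | zero => simpa using h
      | succ i ih2 =>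
        rw [Function.iterate_succ_apply']
        exact ih hsort'.2 _ 0 (fun z _ => Nat.zero_le z) ih2
    have hx' : List.foldl KSstep (KSstep α x) l = [] := by rw [heq]; exact chain j
    exact ih hsort'.2 (KSstep α x) y (fun z hz => hsort'.1 z hz) hx'

lemma sub_large {l₁ l₂ : List ℕ} (hsub : l₁.Sublist l₂) :
    ∀ α : List ℕ, l₂.Pairwise (· ≤ ·) → List.foldl KSstep α l₁ = [] →
    List.foldl KSstep α l₂ = [] := by
  induction hsub with
  | slnil => intro α _ h; exact h
  | cons a h ih =>
    intro α hsort hl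
    rw [List.foldl_cons]
    have hsc := List.pairwise_cons.mp hsort
    exact insert_step _ hsc.2 α a (fun z hz => hsc.1 z hz) (ih α hsc.2 hl)
  | cons_cons a h ih =>
    intro α hsort hl
    rw [List.foldl_cons] at hl ⊢
    exact ih _ (List.pairwise_cons.mp hsort).2 hl

lemma fold_glue : ∀ (l₁ l₂ γ δ : List ℕ), (l₁ ++ l₂).Pairwise (· ≤ ·) →
    List.foldl KSstep δ l₁ = [] → List.foldl KSstep γ l₂ = [] →
    List.foldl KSstep (γ ++ δ) (l₁ ++ l₂) = [] := by
  intro l₁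
  induction l₁ with
  | nil =>
    intro l₂ γ δ hs h1 h2
    rw [List.foldl_nil] at h1
    subst h1
    simpa using h2
  | cons x l₁ ih =>
    intro l₂ γ δ hs h1 h2
    by_cases hδ : δ = []
    · subst hδ
      rw [List.append_nil]
      refine sub_large ?_ γ hs h2
      exact (List.sublist_append_right (x :: l₁) l₂)
    · rw [List.cons_append, List.foldl_cons, ks_append γ δ hδ]
      rw [List.foldl_cons] at h1
      rw [List.cons_append] at hs
      exact ih l₂ γ (KSstep δ x) (List.pairwise_cons.mp hs).2 h1 h2

lemma ks_rep_succ (a n w : ℕ) :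
    KSstep (List.replicate (a+1) (n+1)) w = List.replicate a (n+1) ++ List.replicate w n := by
  rw [List.replicate_succ']
  rw [ks_append _ [n+1] (by simp)]
  rfl

lemma fold_rep_zero (l : List ℕ) : ∀ c : ℕ,
    List.foldl KSstep (List.replicate c 0) l = List.replicate (c - l.length) 0 := by
  induction l with
  | nil => intro c; simp
  | cons x l ih =>
    intro c
    cases c with
    | zero =>
      rw [List.foldl_cons]
      have h : KSstep (List.replicate 0 0) x = [] := rfl
      rw [h]
      simpa using fold_nil_init l
    | succ c =>
      rw [List.foldl_cons, ks_rep_zero' c x, ih c]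
      congr 1
      simp

end KSaux

def SparseL (s : List ℕ) : Prop :=
  (∀ x ∈ s, 3 ≤ x) ∧ s.Pairwise (fun x y => 4 ^ x < y)

namespace KSaux

lemma sparse_sorted {s : List ℕ} (h : SparseL s) : s.Pairwise (· ≤ ·) :=
  h.2.imp (fun {a b} hab => le_of_lt (lt_trans (Nat.lt_pow_self (n := a) (a := 4) (by norm_num)) hab))

lemma sparse_sublist {s t : List ℕ} (hsub : t.Sublist s) (h : SparseL s) : SparseL t :=
  ⟨fun x hx => h.1 x (hsub.subset hx), h.2.sublist hsub⟩

lemma sortedle_of_sublist {s l : List ℕ} (hs : SparseL s) (h : l.Sublist s) :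
    l.Pairwise (· ≤ ·) := sparse_sorted (sparse_sublist h hs)

lemma max_credit : ∀ (t : ℕ) (P : ℕ → Prop), P 0 → ∃ F, F ≤ t ∧ P F ∧ (F = t ∨ ¬ P (F+1)) := by
  intro t P h0
  induction t with
  | zero => exact ⟨0, le_rfl, h0, Or.inl rfl⟩
  | succ t ih =>
    by_cases ht : P (t+1)
    · exact ⟨t+1, le_rfl, ht, Or.inl rfl⟩
    · obtain ⟨F, hFle, hPF, hFor⟩ := ih
      rcases hFor with rfl | hnp
      · exact ⟨F, by omega, hPF, Or.inr ht⟩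
      · exact ⟨F, by omega, hPF, Or.inr hnp⟩

lemma pow_help : ∀ w : ℕ, 1 ≤ w → 2 * w + 2 ≤ 4 ^ w := by
  intro w hw
  induction w with
  | zero => omega
  | succ w ih =>
    rcases Nat.eq_zero_or_pos w with h | h
    · subst h; norm_num
    · have h1 := ih h
      have h4 : 4 ≤ 4 ^ w := by
        calc (4:ℕ) = 4 ^ 1 := by norm_num
        _ ≤ 4 ^ w := Nat.pow_le_pow_right (by norm_num) h
      rw [pow_succ]
      omega

lemma subset_sublist : ∀ (l₂ l₁ : List ℕ), l₁.Pairwise (· < ·) → l₂.Pairwise (· < ·) →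
    (∀ x ∈ l₁, x ∈ l₂) → l₁.Sublist l₂ := by
  intro l₂
  induction l₂ with
  | nil =>
    intro l₁ _ _ hsub
    rcases l₁ with _ | ⟨a, t⟩
    · exact List.Sublist.refl []
    · exact absurd (hsub a (by simp)) (by simp)
  | cons b t₂ ih =>
    intro l₁ h₁ h₂ hsub
    rcases l₁ with _ | ⟨a, t₁⟩
    · exact List.nil_sublist _
    by_cases hab : a = b
    · subst hab
      refine List.Sublist.cons₂ a (ih t₁ (List.pairwise_cons.mp h₁).2 (List.pairwise_cons.mp h₂).2 ?_)
      intro x hx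
      have hx2 := hsub x (by simp [hx])
      rcases List.mem_cons.mp hx2 with h | h
      · subst h
        exact absurd ((List.pairwise_cons.mp h₁).1 x hx) (lt_irrefl x)
      · exact h
    · refine List.Sublist.cons b (ih (a :: t₁) h₁ (List.pairwise_cons.mp h₂).2 ?_)
      intro x hx
      have hx2 := hsub x hx
      rcases List.mem_cons.mp hx2 with h | h
      · exfalso
        subst h
        rcases List.mem_cons.mp hx with h' | h'
        · exact hab h'.symm
        · have hba : a < x := (List.pairwise_cons.mp h₁).1 x h'
          have ha2 := hsub a (by simp)
          rcases List.mem_cons.mp ha2 with h'' | h''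
          · exact hab h''
          · exact absurd ((List.pairwise_cons.mp h₂).1 a h'') (by omega)
      · exact h

lemma mainRec (n : ℕ)
    (IHn : ∀ (a b : ℕ) (s : List ℕ) (p : ℕ → Bool), SparseL s →
      List.foldl KSstep (List.replicate (a+b) n) s = [] →
      List.foldl KSstep (List.replicate a n) (s.filter p) = [] ∨
      List.foldl KSstep (List.replicate b n) (s.filter (fun x => !p x)) = []) :
    ∀ (m a b : ℕ) (s : List ℕ) (p : ℕ → Bool) (w₀ w₁ : ℕ), SparseL s →
      3 ≤ w₀ → 3 ≤ w₁ → (∀ x ∈ s, 4 ^ w₀ < x) → (∀ x ∈ s, 4 ^ w₁ < x) →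
      List.foldl KSstep (List.replicate m (n+1)) s = [] → a + b ≤ m + 1 →
      List.foldl KSstep (List.replicate a (n+1)) (w₀ :: s.filter p) = [] ∨
      List.foldl KSstep (List.replicate b (n+1)) (w₁ :: s.filter (fun x => !p x)) = [] := by
  intro m
  induction m with
  | zero =>
    intro a b s p w₀ w₁ _ _ _ _ _ _ hab
    have h : a = 0 ∨ b = 0 := by omega
    rcases h with rfl | rfl
    · left; exact fold_nil_init _
    · right; exact fold_nil_init _
  | succ m ihm =>
    intro a b s p w₀ w₁ hs hw₀ hw₁ h4₀ h4₁ hfold hab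
    rcases a with _ | a'
    · left; exact fold_nil_init _
    rcases b with _ | b'
    · right; exact fold_nil_init _
    classical
    rw [List.replicate_succ'] at hfold
    obtain ⟨s₁, s₂, rfl, h1, h2⟩ := fold_split s (List.replicate m (n+1)) [n+1] hfold
    rcases s₁ with _ | ⟨t, u⟩
    · simp at h1
    rw [List.foldl_cons, ks_succ] at h1
    -- h1 : fold (rep t n) u = []
    have htmem : t ∈ (t :: u) ++ s₂ := by simp
    have ht3 : 3 ≤ t := hs.1 t htmem
    have hsu : SparseL u :=
      sparse_sublist ((List.sublist_cons_self t u).trans (List.sublist_append_left _ _)) hs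
    have hs₂ : SparseL s₂ := sparse_sublist (List.sublist_append_right _ _) hs
    have hcross : ∀ y ∈ t :: u, ∀ x ∈ s₂, 4 ^ y < x := (List.pairwise_append.mp hs.2).2.2
    have h4₀t : 4 ^ w₀ < t := h4₀ t htmem
    have h4₁t : 4 ^ w₁ < t := h4₁ t htmem
    have htw : w₀ + w₁ + 2 ≤ t - 1 := by
      have p0 := pow_help w₀ (by omega)
      have p1 := pow_help w₁ (by omega)
      omega
    obtain ⟨F, hFle, hPF', hFor⟩ := max_credit t
      (fun c => List.foldl KSstep (List.replicate c n) (u.filter p) = []) (fold_nil_init _)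
    have hPF : List.foldl KSstep (List.replicate F n) (u.filter p) = [] := hPF'
    by_cases hcase : w₀ + 1 ≤ F
    · -- side 0 completes a unit in this block
      have hsplitF : List.replicate F n = List.replicate (F - w₀) n ++ List.replicate w₀ n := by
        rw [← List.replicate_add]
        congr 1
        omega
      rw [hsplitF] at hPF
      obtain ⟨v₁, v₂, hv, hv1, hv2⟩ := fold_split _ _ _ hPF
      rcases v₂ with _ | ⟨z₀, v₂'⟩
      · rw [List.foldl_nil] at hv2
        have : F - w₀ = 0 := by simpa using congrArg List.length hv2
        omega
      have hz₀f : z₀ ∈ u.filter p := by rw [hv]; simp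
      have hz₀u : z₀ ∈ u := List.mem_of_mem_filter hz₀f
      have hz₀s : z₀ ∈ (t :: u) ++ s₂ := by simp [hz₀u]
      have hz₀3 : 3 ≤ z₀ := hs.1 z₀ hz₀s
      have hz₀s₂ : ∀ x ∈ s₂, 4 ^ z₀ < x := fun x hx => hcross z₀ (by simp [hz₀u]) x hx
      have hw₁s₂ : ∀ x ∈ s₂, 4 ^ w₁ < x := fun x hx => h4₁ x (List.mem_append_right _ hx)
      have hrec := ihm a' (b'+1) s₂ p z₀ w₁ hs₂ hz₀3 hw₁ hz₀s₂ hw₁s₂ h2 (by omega)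
      -- useful sublists
      have hsubz : (v₁ ++ [z₀]).Sublist (u.filter p) := by
        rw [hv]
        exact List.Sublist.append_left (List.Sublist.cons₂ z₀ (List.nil_sublist v₂')) v₁
      have hufp : (u.filter p).Sublist ((t :: u).filter p) :=
        List.Sublist.filter p (List.sublist_cons_self t u)
      rcases hrec with hL | hR
      · left
        have hsubBig : (v₁ ++ (z₀ :: s₂.filter p)).Sublist (((t :: u) ++ s₂).filter p) := by
          rw [List.filter_append, show v₁ ++ (z₀ :: s₂.filter p) = (v₁ ++ [z₀]) ++ s₂.filter p
            by simp]
          exact List.Sublist.append (hsubz.trans hufp) (List.Sublist.refl _)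
        have hsub_s : (v₁ ++ (z₀ :: s₂.filter p)).Sublist ((t :: u) ++ s₂) :=
          hsubBig.trans (List.filter_sublist)
        have hglue : List.foldl KSstep (List.replicate a' (n+1) ++ List.replicate w₀ n)
            (v₁ ++ (z₀ :: s₂.filter p)) = [] :=
          fold_glue v₁ (z₀ :: s₂.filter p) _ _ (sortedle_of_sublist hs hsub_s) hv1 hL
        have hfold2 : List.foldl KSstep (List.replicate (a'+1) (n+1))
            (w₀ :: (v₁ ++ (z₀ :: s₂.filter p))) = [] := by
          rw [List.foldl_cons, ks_rep_succ]
          exact hglue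
        refine sub_large (List.Sublist.cons₂ w₀ hsubBig) _ ?_ hfold2
        refine List.pairwise_cons.mpr ⟨?_, sortedle_of_sublist hs (List.filter_sublist)⟩
        intro x hx
        have hxs : x ∈ (t :: u) ++ s₂ := List.mem_of_mem_filter hx
        have := h4₀ x hxs
        have := Nat.lt_pow_self (n := w₀) (show (1:ℕ) < 4 by norm_num)
        omega
      · right
        refine sub_large (List.Sublist.cons₂ w₁ (List.Sublist.filter _
          (List.sublist_append_right (t :: u) s₂))) _ ?_ hR
        refine List.pairwise_cons.mpr ⟨?_, sortedle_of_sublist hs (List.filter_sublist)⟩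
        intro x hx
        have hxs : x ∈ (t :: u) ++ s₂ := List.mem_of_mem_filter hx
        have := h4₁ x hxs
        have := Nat.lt_pow_self (n := w₁) (show (1:ℕ) < 4 by norm_num)
        omega
    · -- side 1 completes a unit in this block
      have hFw : F ≤ w₀ := by omega
      have hFlt : F < t := by omega
      have hnP : ¬ List.foldl KSstep (List.replicate (F+1) n) (u.filter p) = [] := by
        rcases hFor with rfl | h
        · omega
        · exact h
      have hIH := IHn (F+1) (t - (F+1)) u p hsu
        (by rw [show F+1+(t-(F+1)) = t by omega]; exact h1)
      rcases hIH with hbad | hD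
      · exact absurd hbad hnP
      have hDw : w₁ + 1 ≤ t - (F+1) := by omega
      have hsplitD : List.replicate (t - (F+1)) n =
          List.replicate (t - (F+1) - w₁) n ++ List.replicate w₁ n := by
        rw [← List.replicate_add]
        congr 1
        omega
      rw [hsplitD] at hD
      obtain ⟨v₁, v₂, hv, hv1, hv2⟩ := fold_split _ _ _ hD
      rcases v₂ with _ | ⟨z₁, v₂'⟩
      · rw [List.foldl_nil] at hv2
        have : t - (F+1) - w₁ = 0 := by simpa using congrArg List.length hv2
        omega
      have hz₁f : z₁ ∈ u.filter (fun x => !p x) := by rw [hv]; simp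
      have hz₁u : z₁ ∈ u := List.mem_of_mem_filter hz₁f
      have hz₁s : z₁ ∈ (t :: u) ++ s₂ := by simp [hz₁u]
      have hz₁3 : 3 ≤ z₁ := hs.1 z₁ hz₁s
      have hz₁s₂ : ∀ x ∈ s₂, 4 ^ z₁ < x := fun x hx => hcross z₁ (by simp [hz₁u]) x hx
      have hw₀s₂ : ∀ x ∈ s₂, 4 ^ w₀ < x := fun x hx => h4₀ x (List.mem_append_right _ hx)
      have hrec := ihm (a'+1) b' s₂ p w₀ z₁ hs₂ hw₀ hz₁3 hw₀s₂ hz₁s₂ h2 (by omega)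
      have hsubz : (v₁ ++ [z₁]).Sublist (u.filter (fun x => !p x)) := by
        rw [hv]
        exact List.Sublist.append_left (List.Sublist.cons₂ z₁ (List.nil_sublist v₂')) v₁
      have hufp : (u.filter (fun x => !p x)).Sublist ((t :: u).filter (fun x => !p x)) :=
        List.Sublist.filter _ (List.sublist_cons_self t u)
      rcases hrec with hL | hR
      · left
        refine sub_large (List.Sublist.cons₂ w₀ (List.Sublist.filter _
          (List.sublist_append_right (t :: u) s₂))) _ ?_ hL
        refine List.pairwise_cons.mpr ⟨?_, sortedle_of_sublist hs (List.filter_sublist)⟩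
        intro x hx
        have hxs : x ∈ (t :: u) ++ s₂ := List.mem_of_mem_filter hx
        have := h4₀ x hxs
        have := Nat.lt_pow_self (n := w₀) (show (1:ℕ) < 4 by norm_num)
        omega
      · right
        have hsubBig : (v₁ ++ (z₁ :: s₂.filter (fun x => !p x))).Sublist
            (((t :: u) ++ s₂).filter (fun x => !p x)) := by
          rw [List.filter_append, show v₁ ++ (z₁ :: s₂.filter (fun x => !p x)) =
            (v₁ ++ [z₁]) ++ s₂.filter (fun x => !p x) by simp]
          exact List.Sublist.append (hsubz.trans hufp) (List.Sublist.refl _)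
        have hsub_s : (v₁ ++ (z₁ :: s₂.filter (fun x => !p x))).Sublist ((t :: u) ++ s₂) :=
          hsubBig.trans (List.filter_sublist)
        have hglue : List.foldl KSstep (List.replicate b' (n+1) ++ List.replicate w₁ n)
            (v₁ ++ (z₁ :: s₂.filter (fun x => !p x))) = [] :=
          fold_glue v₁ (z₁ :: s₂.filter (fun x => !p x)) _ _
            (sortedle_of_sublist hs hsub_s) hv1 hR
        have hfold2 : List.foldl KSstep (List.replicate (b'+1) (n+1))
            (w₁ :: (v₁ ++ (z₁ :: s₂.filter (fun x => !p x)))) = [] := by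
          rw [List.foldl_cons, ks_rep_succ]
          exact hglue
        refine sub_large (List.Sublist.cons₂ w₁ hsubBig) _ ?_ hfold2
        refine List.pairwise_cons.mpr ⟨?_, sortedle_of_sublist hs (List.filter_sublist)⟩
        intro x hx
        have hxs : x ∈ (t :: u) ++ s₂ := List.mem_of_mem_filter hx
        have := h4₁ x hxs
        have := Nat.lt_pow_self (n := w₁) (show (1:ℕ) < 4 by norm_num)
        omega

end KSaux

namespace KSaux

lemma MLstepAux (n : ℕ)
    (IHn : ∀ (a b : ℕ) (s : List ℕ) (p : ℕ → Bool), SparseL s →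
      List.foldl KSstep (List.replicate (a+b) n) s = [] →
      List.foldl KSstep (List.replicate a n) (s.filter p) = [] ∨
      List.foldl KSstep (List.replicate b n) (s.filter (fun x => !p x)) = [])
    (k : ℕ)
    (ihk : ∀ (a b : ℕ) (s : List ℕ) (p : ℕ → Bool), a + b = k → SparseL s →
      List.foldl KSstep (List.replicate (a+b) (n+1)) s = [] →
      List.foldl KSstep (List.replicate a (n+1)) (s.filter p) = [] ∨
      List.foldl KSstep (List.replicate b (n+1)) (s.filter (fun x => !p x)) = [])
    (a' b' t : ℕ) (u s₂ : List ℕ) (p : ℕ → Bool)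
    (hk : a' + b' + 1 = k)
    (hpt : p t = true)
    (hs : SparseL ((t :: u) ++ s₂))
    (hu : List.foldl KSstep (List.replicate t n) u = [])
    (h2 : List.foldl KSstep (List.replicate (a'+b'+1) (n+1)) s₂ = []) :
    List.foldl KSstep (List.replicate (a'+1) (n+1)) (((t :: u) ++ s₂).filter p) = [] ∨
    List.foldl KSstep (List.replicate (b'+1) (n+1))
      (((t :: u) ++ s₂).filter (fun x => !p x)) = [] := by
  classical
  have htmem : t ∈ (t :: u) ++ s₂ := by simp
  have ht3 : 3 ≤ t := hs.1 t htmem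
  have hsu : SparseL u :=
    sparse_sublist ((List.sublist_cons_self t u).trans (List.sublist_append_left _ _)) hs
  have hs₂ : SparseL s₂ := sparse_sublist (List.sublist_append_right _ _) hs
  have hcross : ∀ y ∈ t :: u, ∀ x ∈ s₂, 4 ^ y < x := (List.pairwise_append.mp hs.2).2.2
  have hfil : ((t :: u) ++ s₂).filter p = (t :: u.filter p) ++ s₂.filter p := by
    rw [List.filter_append, List.filter_cons_of_pos hpt]
  have hfil' : ((t :: u) ++ s₂).filter (fun x => !p x) =
      u.filter (fun x => !p x) ++ s₂.filter (fun x => !p x) := by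
    rw [List.filter_append, List.filter_cons_of_neg (by simp [hpt])]
  obtain ⟨F, hFle, hPF', hFor⟩ := max_credit t
    (fun c => List.foldl KSstep (List.replicate c n) (u.filter p) = []) (fold_nil_init _)
  have hPF : List.foldl KSstep (List.replicate F n) (u.filter p) = [] := hPF'
  by_cases hFt : F = t
  · -- case (i): side 0 completes a unit at the bottom block
    rw [hFt] at hPF
    have hre := ihk a' (b'+1) s₂ p (by omega) hs₂
      (by rw [show a'+(b'+1) = a'+b'+1 by omega]; exact h2)
    rcases hre with hL | hR
    · left
      rw [hfil, List.replicate_succ']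
      apply fold_glue
      · rw [← hfil]
        exact sortedle_of_sublist hs (List.filter_sublist)
      · rw [List.foldl_cons, ks_succ]
        exact hPF
      · exact hL
    · right
      refine sub_large (List.Sublist.filter _ (List.sublist_append_right (t :: u) s₂)) _ ?_ hR
      exact sortedle_of_sublist hs (List.filter_sublist)
  · -- case (ii): heads t (side 0) and z₁ (side 1), recurse with mainRec
    have hFlt : F < t := by omega
    have hnP : ¬ List.foldl KSstep (List.replicate (F+1) n) (u.filter p) = [] := by
      rcases hFor with rfl | h
      · omega
      · exact h
    have hne : u.filter (fun x => !p x) ≠ [] := by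
      intro hnil
      have hup : u.filter p = u := by
        rw [List.filter_eq_self]
        intro x hx
        have hq := List.filter_eq_nil_iff.mp hnil x hx
        simpa using hq
      have hPt : List.foldl KSstep (List.replicate t n) (u.filter p) = [] := by
        rw [hup]; exact hu
      have hsplit : List.replicate t n =
          List.replicate (t - (F+1)) n ++ List.replicate (F+1) n := by
        rw [← List.replicate_add]
        congr 1
        omega
      rw [hsplit] at hPt
      obtain ⟨l₁, l₂, hl, h1', _⟩ := fold_split _ _ _ hPt
      apply hnP
      refine sub_large ?_ _ ?_ h1'
      · rw [hl]; exact List.sublist_append_left _ _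
      · exact sortedle_of_sublist hsu (List.filter_sublist)
    rcases hq : u.filter (fun x => !p x) with _ | ⟨z₁, v⟩
    · exact absurd hq hne
    have hz₁f : z₁ ∈ u.filter (fun x => !p x) := by rw [hq]; simp
    have hz₁u : z₁ ∈ u := List.mem_of_mem_filter hz₁f
    have hz₁3 : 3 ≤ z₁ := hs.1 z₁ (by simp [hz₁u])
    have hmain := mainRec n IHn (a'+b'+1) (a'+1) (b'+1) s₂ p t z₁ hs₂ ht3 hz₁3
      (fun x hx => hcross t (by simp) x hx) (fun x hx => hcross z₁ (by simp [hz₁u]) x hx)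
      h2 (by omega)
    rcases hmain with hL | hR
    · left
      refine sub_large ?_ _ ?_ hL
      · rw [hfil, List.cons_append]
        exact List.Sublist.cons₂ t (List.sublist_append_right _ _)
      · exact sortedle_of_sublist hs (List.filter_sublist)
    · right
      refine sub_large ?_ _ ?_ hR
      · rw [hfil', hq, List.cons_append]
        exact List.Sublist.cons₂ z₁ (List.sublist_append_right _ _)
      · exact sortedle_of_sublist hs (List.filter_sublist)

lemma ML : ∀ (n a b : ℕ) (s : List ℕ) (p : ℕ → Bool), SparseL s →
    List.foldl KSstep (List.replicate (a+b) n) s = [] →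
    List.foldl KSstep (List.replicate a n) (s.filter p) = [] ∨
    List.foldl KSstep (List.replicate b n) (s.filter (fun x => !p x)) = [] := by
  intro n
  induction n with
  | zero =>
    intro a b s p _ h
    have h0 : List.replicate (a + b - s.length) 0 = [] := by
      rw [← fold_rep_zero]; exact h
    have hlen : a + b ≤ s.length := by
      have := congrArg List.length h0
      simp at this
      omega
    have hsum : (s.filter p).length + (s.filter (fun x => !p x)).length = s.length := by
      have hperm := (List.filter_append_perm p s).length_eq
      simpa using hperm
    have hc : a ≤ (s.filter p).length ∨ b ≤ (s.filter (fun x => !p x)).length := by omega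
    rcases hc with hc | hc
    · left
      rw [fold_rep_zero, Nat.sub_eq_zero_of_le hc]
      rfl
    · right
      rw [fold_rep_zero, Nat.sub_eq_zero_of_le hc]
      rfl
  | succ n IHn =>
    intro a b s p hs h
    suffices H : ∀ (k a b : ℕ) (s : List ℕ) (p : ℕ → Bool), a + b = k → SparseL s →
        List.foldl KSstep (List.replicate (a+b) (n+1)) s = [] →
        List.foldl KSstep (List.replicate a (n+1)) (s.filter p) = [] ∨
        List.foldl KSstep (List.replicate b (n+1)) (s.filter (fun x => !p x)) = [] by
      exact H (a+b) a b s p rfl hs h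
    intro k
    induction k with
    | zero =>
      intro a b s p hab _ _
      left
      have ha : a = 0 := by omega
      subst ha
      exact fold_nil_init _
    | succ k ihk =>
      intro a b s p hab hs h
      rcases a with _ | a'
      · left; exact fold_nil_init _
      rcases b with _ | b'
      · right; exact fold_nil_init _
      have hrw : a' + 1 + (b' + 1) = (a' + b' + 1) + 1 := by omega
      rw [hrw, List.replicate_succ'] at h
      obtain ⟨s₁, s₂, rfl, h1, h2⟩ := fold_split s (List.replicate (a'+b'+1) (n+1)) [n+1] h
      rcases s₁ with _ | ⟨t, u⟩
      · simp at h1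
      rw [List.foldl_cons, ks_succ] at h1
      by_cases hpt : p t = true
      · exact MLstepAux n IHn k ihk a' b' t u s₂ p (by omega) hpt hs h1 h2
      · have hpt' : (fun x => !p x) t = true := by simp [hpt]
        have hswap := MLstepAux n IHn k ihk b' a' t u s₂ (fun x => !p x) (by omega) hpt' hs h1
          (by rw [show b'+a'+1 = a'+b'+1 by omega]; exact h2)
        have hnn : (fun x => !(!p x)) = p := by
          funext x
          exact Bool.not_not _
        rw [hnn] at hswap
        exact hswap.symm

end KSaux


/-- Let `n ∈ ℕ`. If `X = Y₀ ∪ Y₁ ⊆ ℕ` is a finite set which is `ω^n·2`-large and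
exp-sparse, then `Y₀` is `ω^n`-large or `Y₁` is `ω^n`-large. -/
theorem isLarge_of_union_two (n : ℕ) (Y₀ Y₁ : Finset ℕ)
    (hX : IsLarge [n, n] (Y₀ ∪ Y₁)) (hs : ExpSparse (Y₀ ∪ Y₁)) :
    IsLarge [n] Y₀ ∨ IsLarge [n] Y₁ := by
  classical
  set s := (Y₀ ∪ Y₁).sort (· ≤ ·) with hsdef
  have hsp : SparseL s := by
    constructor
    · intro x hx
      exact hs.1 x (by rwa [hsdef, Finset.mem_sort] at hx)
    · have hlt : s.Pairwise (· < ·) := (Finset.sortedLT_sort _).pairwise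
      refine List.Pairwise.imp_of_mem ?_ hlt
      intro a b ha hb hab
      exact hs.2 a (by rwa [hsdef, Finset.mem_sort] at ha)
        b (by rwa [hsdef, Finset.mem_sort] at hb) hab
  have h2 : List.foldl KSstep (List.replicate (1+1) n) s = [] := hX
  have hml := KSaux.ML n 1 1 s (fun x => decide (x ∈ Y₀)) hsp h2
  have key : ∀ (Y : Finset ℕ) (l : List ℕ), l.Pairwise (· < ·) → (∀ x ∈ l, x ∈ Y) →
      List.foldl KSstep [n] l = [] → IsLarge [n] Y := by
    intro Y l hsort hmem hl
    have hsub : l.Sublist (Y.sort (· ≤ ·)) :=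
      KSaux.subset_sublist _ _ hsort (Finset.sortedLT_sort Y).pairwise
        (fun x hx => (Finset.mem_sort _).mpr (hmem x hx))
    exact KSaux.sub_large hsub _ (Finset.pairwise_sort _ _) hl
  have hslt : s.Pairwise (· < ·) := (Finset.sortedLT_sort _).pairwise
  rcases hml with hL | hR
  · left
    refine key Y₀ _ (hslt.sublist (List.filter_sublist)) ?_ hL
    intro x hx
    have := List.of_mem_filter hx
    simpa using this
  · right
    refine key Y₁ _ (hslt.sublist (List.filter_sublist)) ?_ hR
    intro x hx
    have hxp := List.of_mem_filter hx
    have hxs : x ∈ s := List.mem_of_mem_filter hx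
    have hxu : x ∈ Y₀ ∪ Y₁ := by rwa [hsdef, Finset.mem_sort] at hxs
    have : x ∉ Y₀ := by simpa using hxp
    rcases Finset.mem_union.mp hxu with h' | h'
    · exact absurd h' this
    · exact h'
end

section
/- Let X ⊆ ℕ be a finite set which is ω^{n+1}-large and exp-sparse, and let c ∈ ℕ with 4^c ≤ min X. For any finite W ⊆ ℕ with |W| ≤ c and max X < min W, and for any colouring P : [X ∪ W]^2 → 2, there exists Y ⊆ X such that Y is ω^n-large and P(y, w) = P(y', w) for all w ∈ W and all y, y' ∈ Y. -/
@[simp] lemma KSstep_nil (m : ℕ) : KSstep [] m = [] := rfl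
@[simp] lemma KSstep_zero_sing (m : ℕ) : KSstep [0] m = [] := rfl
@[simp] lemma KSstep_succ_sing (n m : ℕ) : KSstep [n+1] m = List.replicate m n := rfl
@[simp] lemma KSstep_cons_cons (a b : ℕ) (l : List ℕ) (m : ℕ) :
    KSstep (a :: b :: l) m = a :: KSstep (b :: l) m := by cases a <;> rfl

lemma KSstep_append_zero (ρ : List ℕ) (m : ℕ) : KSstep (ρ ++ [0]) m = ρ := by
  induction ρ with
  | nil => rfl
  | cons a ρ ih =>
    cases ρ with
    | nil => cases a <;> rfl
    | cons b t => simpa using ih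

lemma KSstep_append_succ (ρ : List ℕ) (s m : ℕ) :
    KSstep (ρ ++ [s+1]) m = ρ ++ List.replicate m s := by
  induction ρ with
  | nil => rfl
  | cons a ρ ih =>
    cases ρ with
    | nil => cases a <;> rfl
    | cons b t => simpa using ih

lemma KSstep_zero (l : List ℕ) : KSstep l 0 = l.dropLast := by
  induction l with
  | nil => rfl
  | cons a l ih =>
    cases l with
    | nil => cases a <;> rfl
    | cons b t => simpa using ih

def listLarge (γ : List ℕ) (l : List ℕ) : Prop := l.foldl KSstep γ = []

@[simp] lemma foldl_KSstep_nil (l : List ℕ) : l.foldl KSstep [] = [] := by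
  induction l with
  | nil => rfl
  | cons a l ih => simpa using ih

@[simp] lemma listLarge_nil_left (l : List ℕ) : listLarge [] l := by
  simp [listLarge]

lemma listLarge_cons (γ : List ℕ) (x : ℕ) (l : List ℕ) :
    listLarge γ (x :: l) ↔ listLarge (KSstep γ x) l := Iff.rfl

lemma listLarge_nil (γ : List ℕ) : listLarge γ [] ↔ γ = [] := Iff.rfl
-- Reach m γ δ : δ is obtained from γ by KS-steps with parameters ≤ m
def Reach (m : ℕ) : List ℕ → List ℕ → Prop :=
  Relation.ReflTransGen (fun u v => ∃ p ≤ m, v = KSstep u p)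

lemma Reach.refl (m : ℕ) (γ : List ℕ) : Reach m γ γ := Relation.ReflTransGen.refl

lemma Reach.single {m p : ℕ} (γ : List ℕ) (hp : p ≤ m) : Reach m γ (KSstep γ p) :=
  Relation.ReflTransGen.single ⟨p, hp, rfl⟩

lemma Reach.trans {m : ℕ} {γ δ ε : List ℕ} (h1 : Reach m γ δ) (h2 : Reach m δ ε) :
    Reach m γ ε := Relation.ReflTransGen.trans h1 h2

lemma Reach.nil_eq {m : ℕ} {δ : List ℕ} (h : Reach m [] δ) : δ = [] := by
  induction h with
  | refl => rfl
  | tail _ h ih => obtain ⟨p, _, rfl⟩ := h; simp [ih]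

lemma Reach.mono {m m' : ℕ} (hm : m ≤ m') {γ δ : List ℕ} (h : Reach m γ δ) :
    Reach m' γ δ := by
  induction h with
  | refl => exact Reach.refl _ _
  | tail _ h ih => obtain ⟨p, hp, rfl⟩ := h; exact ih.trans (Reach.single _ (hp.trans hm))

lemma Reach.dropLast {m : ℕ} (γ : List ℕ) : Reach m γ γ.dropLast := by
  have := Reach.single (m := m) (p := 0) γ (Nat.zero_le m)
  rwa [KSstep_zero] at this

lemma Reach.pops {m : ℕ} (ρ σ : List ℕ) : Reach m (ρ ++ σ) ρ := by
  induction σ using List.reverseRecOn with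
  | nil => simpa using Reach.refl m ρ
  | append_singleton σ s ih =>
    have h1 : Reach m (ρ ++ (σ ++ [s])) (ρ ++ σ) := by
      have := Reach.dropLast (m := m) ((ρ ++ σ) ++ [s])
      rw [List.dropLast_concat] at this
      rwa [List.append_assoc] at this
    exact h1.trans ih

lemma Reach.cons {m : ℕ} {γ δ : List ℕ} (a : ℕ) (h : Reach m γ δ) :
    Reach m (a :: γ) (a :: δ) := by
  induction h using Relation.ReflTransGen.head_induction_on with
  | refl => exact Reach.refl _ _
  | head hstep _ ih =>
    rename_i γ₁ γ₂ _
    obtain ⟨p, hp, rfl⟩ := hstep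
    cases γ₁ with
    | nil =>
      simp only [KSstep_nil] at ih ⊢
      exact ih
    | cons b t =>
      exact (Relation.ReflTransGen.single ⟨p, hp, by simp⟩).trans ih

lemma Reach.append_left {m : ℕ} {γ δ : List ℕ} (ρ : List ℕ) (h : Reach m γ δ) :
    Reach m (ρ ++ γ) (ρ ++ δ) := by
  induction ρ with
  | nil => simpa using h
  | cons a ρ ih => simpa using ih.cons a
-- Key commutation: if x ≤ y then γ[x][y] is reachable from γ[y] by steps with params ≤ y.
lemma R1 : ∀ (γ : List ℕ) (x y : ℕ), x ≤ y →
    Reach y (KSstep γ y) (KSstep (KSstep γ x) y)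
  | [], x, y, _ => by simp; exact Reach.refl _ _
  | [0], x, y, _ => by simp; exact Reach.refl _ _
  | [Nat.succ n], x, y, hxy => by
    simp only [KSstep_succ_sing]
    cases x with
    | zero =>
      simp only [List.replicate_zero, KSstep_nil]
      exact Reach.pops [] _
    | succ s =>
      have hsy : s < y := Nat.lt_of_lt_of_le (Nat.lt_succ_self s) hxy
      have hrep : List.replicate (s+1) n = List.replicate s n ++ [n] := by
        rw [← List.replicate_succ']
      cases n with
      | zero =>
        rw [hrep, KSstep_append_zero]
        have : List.replicate y 0 = List.replicate s 0 ++ List.replicate (y - s) 0 := by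
          rw [← List.replicate_add]; congr 1; omega
        rw [this]
        exact Reach.pops _ _
      | succ t =>
        rw [hrep, KSstep_append_succ]
        have hy : List.replicate y (t+1) =
            List.replicate s (t+1) ++ ([t+1] ++ List.replicate (y - s - 1) (t+1)) := by
          have : [t+1] ++ List.replicate (y - s - 1) (t+1) = List.replicate (y - s) (t+1) := by
            rw [show y - s = (y - s - 1) + 1 by omega, List.replicate_succ]
            rfl
          rw [this, ← List.replicate_add]
          congr 1; omega
        rw [hy]
        apply Reach.append_left
        have h1 : Reach y ([t+1] ++ List.replicate (y - s - 1) (t+1)) [t+1] := Reach.pops _ _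
        have h2 : Reach y [t+1] (List.replicate y t) := by
          have := Reach.single (m := y) (p := y) [t+1] le_rfl
          simpa using this
        exact h1.trans h2
  | a :: b :: t, x, y, hxy => by
    have ih := R1 (b :: t) x y hxy
    simp only [KSstep_cons_cons]
    cases hk : KSstep (b :: t) x with
    | nil =>
      rw [hk] at ih
      simp only [KSstep_nil] at ih
      have h1 : Reach y (a :: KSstep (b :: t) y) [a] := by
        have := ih.cons a
        simpa using this
      have h2 : Reach y [a] (KSstep [a] y) := Reach.single _ le_rfl
      exact h1.trans h2
    | cons g gs =>
      rw [hk] at ih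
      have := ih.cons a
      simpa using this

-- single-step and multi-step largeness transfer
lemma MS : ∀ (l : List ℕ), l.Pairwise (· ≤ ·) → ∀ (m : ℕ) (γ δ : List ℕ),
    (∀ z ∈ l, m ≤ z) → Reach m γ δ → listLarge γ l → listLarge δ l
  | [], _, m, γ, δ, _, hr, hl => by
    rw [listLarge_nil] at hl
    subst hl
    rw [listLarge_nil]
    exact hr.nil_eq
  | y :: l', hsort, m, γ, δ, hmin, hr, hl => by
    induction hr using Relation.ReflTransGen.head_induction_on with
    | refl => exact hl
    | head hstep _ ih =>
      rename_i γ₁ γ₂ _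
      obtain ⟨p, hp, rfl⟩ := hstep
      apply ih
      have hmy : m ≤ y := hmin y (by simp)
      have hr1 : Reach y (KSstep γ₁ y) (KSstep (KSstep γ₁ p) y) := R1 γ₁ p y (hp.trans hmy)
      rw [listLarge_cons] at hl ⊢
      exact MS l' hsort.of_cons y _ _ (fun z hz => (List.rel_of_pairwise_cons hsort hz)) hr1 hl
-- merge of two CNF (descending) lists
abbrev Desc (l : List ℕ) : Prop := l.Pairwise (· ≥ ·)

def mrg (a b : List ℕ) : List ℕ := List.insertionSort (· ≥ ·) (a ++ b)

lemma mrg_sorted (a b : List ℕ) : Desc (mrg a b) := List.pairwise_insertionSort _ _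

lemma mrg_perm (a b : List ℕ) : List.Perm (mrg a b) (a ++ b) := List.perm_insertionSort _ _

lemma desc_eq_of_perm {l₁ l₂ : List ℕ} (hp : List.Perm l₁ l₂) (h₁ : Desc l₁) (h₂ : Desc l₂) :
    l₁ = l₂ := List.Perm.eq_of_pairwise' h₁ h₂ hp

lemma mrg_eq_of_perm {a b c : List ℕ} (hc : Desc c) (hp : List.Perm c (a ++ b)) : mrg a b = c :=
  desc_eq_of_perm ((mrg_perm a b).trans hp.symm) (mrg_sorted a b) hc

lemma mrg_comm (a b : List ℕ) : mrg a b = mrg b a :=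
  mrg_eq_of_perm (mrg_sorted b a) ((mrg_perm b a).trans (List.perm_append_comm))

lemma mrg_nil_right {a : List ℕ} (ha : Desc a) : mrg a [] = a := by
  apply mrg_eq_of_perm ha; simp

lemma mrg_nil_left {a : List ℕ} (ha : Desc a) : mrg [] a = a := by
  rw [mrg_comm]; exact mrg_nil_right ha

lemma mrg_eq_nil_iff {a b : List ℕ} : mrg a b = [] ↔ a = [] ∧ b = [] := by
  constructor
  · intro h
    have := mrg_perm a b
    rw [h] at this
    have := this.symm.eq_nil  -- a ++ b = []
    simp at this
    exact this
  · rintro ⟨rfl, rfl⟩; rfl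

lemma desc_append {a : List ℕ} {b : List ℕ} (ha : Desc a) (hb : Desc b)
    (hab : ∀ x ∈ a, ∀ y ∈ b, y ≤ x) : Desc (a ++ b) := by
  exact List.pairwise_append.2 ⟨ha, hb, fun x hx y hy => hab x hx y hy⟩

lemma desc_replicate (k n : ℕ) : Desc (List.replicate k n) := by
  induction k with
  | zero => exact List.Pairwise.nil
  | succ k ih => rw [List.replicate_succ]; exact List.Pairwise.cons (fun y hy => by
      rw [List.eq_of_mem_replicate hy]) ih

-- merge of replicates
lemma mrg_replicate (a b n : ℕ) :
    mrg (List.replicate a n) (List.replicate b n) = List.replicate (a+b) n := by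
  exact mrg_eq_of_perm (desc_replicate _ _) (by rw [List.replicate_add])
lemma Reach.descend {m : ℕ} (hm : 1 ≤ m) (b : ℕ) : ∀ k, Reach m [b + k] [b]
  | 0 => Reach.refl m [b]
  | (k+1) => by
    have h1 : Reach m [b + (k+1)] [b + k] := by
      have := Reach.single (m := m) (p := 1) [b + k + 1] hm
      rw [← Nat.add_assoc]; simpa using this
    exact h1.trans (Reach.descend hm b k)

lemma Reach.transf : ∀ (δ : List ℕ), Desc δ → ∀ (j a m : ℕ),
    (∀ b ∈ δ, b ≤ a) → δ.length ≤ j → δ.length ≤ m →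
    Reach m (List.replicate j a) δ
  | [], _, j, a, m, _, _, _ => by
    simpa using Reach.pops (m := m) [] (List.replicate j a)
  | b :: δ', hdesc, j, a, m, hba, hlen, hm => by
    simp only [List.length_cons] at hlen hm
    have hδ'a : ∀ c ∈ δ', c ≤ b := fun c hc => List.rel_of_pairwise_cons hdesc hc
    have hm1 : 1 ≤ m := le_trans (Nat.succ_le_succ (Nat.zero_le _)) hm
    rcases eq_or_lt_of_le (hba b (by simp)) with hb | hb
    · subst hb
      have hj : j = (j - 1) + 1 := by omega
      rw [hj, List.replicate_succ]
      exact (Reach.transf δ' hdesc.of_cons (j-1) b m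
        hδ'a (by omega) (by omega)).cons b
    · -- b < a
      have h1 : Reach m (List.replicate j a) [a] := by
        have hj : List.replicate j a = [a] ++ List.replicate (j-1) a := by
          rw [show j = (j-1)+1 by omega, List.replicate_succ]; rfl
        rw [hj]; exact Reach.pops _ _
      have h2 : Reach m [a] [b + 1] := by
        have := Reach.descend hm1 (b+1) (a - b - 1)
        rwa [show b + 1 + (a - b - 1) = a by omega] at this
      have h3 : Reach m [b + 1] (List.replicate (δ'.length + 1) b) := by
        have := Reach.single (m := m) (p := δ'.length + 1) [b+1] (by omega)
        simpa using this
      have h4 : Reach m (List.replicate (δ'.length + 1) b) (b :: δ') := by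
        rw [List.replicate_succ]
        exact (Reach.transf δ' hdesc.of_cons δ'.length b m hδ'a le_rfl (by omega)).cons b
      exact ((h1.trans h2).trans h3).trans h4

lemma Reach.build {δ : List ℕ} (hdesc : Desc δ) {t m : ℕ}
    (hbt : ∀ b ∈ δ, b ≤ t) (hlen : δ.length ≤ m) (hm : 1 ≤ m) :
    Reach m [t+1] δ := by
  cases δ with
  | nil =>
    have := Reach.dropLast (m := m) [t+1]
    simpa using this
  | cons b δ' =>
    have hb : b ≤ t := hbt b (by simp)
    have h2 : Reach m [t+1] [b + 1] := by
      have := Reach.descend hm (b+1) (t - b)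
      rwa [show b + 1 + (t - b) = t + 1 by omega] at this
    simp only [List.length_cons] at hlen
    have h3 : Reach m [b + 1] (List.replicate (δ'.length + 1) b) := by
      have := Reach.single (m := m) (p := δ'.length + 1) [b+1] (by omega)
      simpa using this
    have h4 : Reach m (List.replicate (δ'.length + 1) b) (b :: δ') := by
      rw [List.replicate_succ]
      exact (Reach.transf δ' hdesc.of_cons δ'.length b m
        (fun c hc => List.rel_of_pairwise_cons hdesc hc) le_rfl (by omega)).cons b
    exact (h2.trans h3).trans h4
lemma mrg_concat_small {α β' σ : List ℕ} (hα : Desc α) (hβ : Desc β') (hσ : Desc σ)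
    (h1 : ∀ s ∈ σ, ∀ a ∈ α, s ≤ a) (h2 : ∀ s ∈ σ, ∀ b ∈ β', s ≤ b) :
    mrg α (β' ++ σ) = mrg α β' ++ σ := by
  apply mrg_eq_of_perm
  · apply desc_append (mrg_sorted α β') hσ
    intro a ha s hs
    rcases List.mem_append.1 ((mrg_perm α β').mem_iff.1 ha) with h | h
    · exact h1 s hs a h
    · exact h2 s hs a h
  · have h3 : List.Perm (mrg α β' ++ σ) ((α ++ β') ++ σ) := (mrg_perm α β').append_right σ
    rw [List.append_assoc] at h3
    exact h3
  
lemma desc_concat_min {α' : List ℕ} {e : ℕ} (h : Desc (α' ++ [e])) :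
    ∀ a ∈ α', e ≤ a := by
  intro a ha
  have := (List.pairwise_append.1 h).2.2 a ha e (by simp)
  exact this

lemma desc_concat_left {α' : List ℕ} {e : ℕ} (h : Desc (α' ++ [e])) : Desc α' :=
  (List.pairwise_append.1 h).1

lemma desc_dropWhile_lt {l : List ℕ} (hl : Desc l) (d : ℕ) :
    ∀ a ∈ l.dropWhile (fun a => decide (d ≤ a)), a < d := by
  induction l with
  | nil => simp
  | cons b t ih =>
    by_cases hb : d ≤ b
    · rw [List.dropWhile_cons_of_pos (by simpa using hb)]
      exact ih hl.of_cons
    · rw [List.dropWhile_cons_of_neg (by simpa using hb)]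
      intro a ha
      rcases List.mem_cons.1 ha with rfl | ha
      · omega
      · have := List.rel_of_pairwise_cons hl ha
        omega

lemma mem_takeWhile_ge {l : List ℕ} (d : ℕ) :
    ∀ a ∈ l.takeWhile (fun a => decide (d ≤ a)), d ≤ a := by
  intro a ha
  have := List.mem_takeWhile_imp ha
  simpa using this

instance : IsAntisymm ℕ (· ≤ ·) := ⟨fun _ _ h h' => le_antisymm h h'⟩

-- Finset sort lemmas
lemma sort_min_cons {B : Finset ℕ} {x : ℕ} (hx : x ∈ B) (hmin : ∀ z ∈ B, x ≤ z) :
    B.sort (· ≤ ·) = x :: (B.erase x).sort (· ≤ ·) := by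
  have hperm : List.Perm (B.sort (· ≤ ·)) (x :: (B.erase x).sort (· ≤ ·)) := by
    rw [← Multiset.coe_eq_coe]
    show (↑(B.sort (· ≤ ·)) : Multiset ℕ) = ↑(x :: (B.erase x).sort (· ≤ ·))
    rw [Finset.sort_eq]
    show B.val = x ::ₘ ↑((B.erase x).sort (· ≤ ·))
    rw [Finset.sort_eq, Finset.erase_val]
    exact (Multiset.cons_erase (by rwa [← Finset.mem_def])).symm
  have hs2 : (x :: (B.erase x).sort (· ≤ ·)).Pairwise (· ≤ ·) := by
    rw [List.pairwise_cons]
    refine ⟨fun b hb => ?_, Finset.pairwise_sort _ _⟩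
    have : b ∈ B.erase x := (Finset.mem_sort _).1 hb
    exact hmin b (Finset.mem_of_mem_erase this)
  exact List.Perm.eq_of_pairwise' (Finset.pairwise_sort _ _) hs2 hperm

lemma isLarge_iff_erase_min {B : Finset ℕ} {x : ℕ} (hx : x ∈ B) (hmin : ∀ z ∈ B, x ≤ z)
    (γ : List ℕ) : IsLarge γ B ↔ listLarge (KSstep γ x) ((B.erase x).sort (· ≤ ·)) := by
  unfold IsLarge
  rw [sort_min_cons hx hmin]
  rfl

lemma nat_two_mul_add_two_le {z : ℕ} (hz : 1 ≤ z) : 2*z + 2 ≤ 4^z := by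
  induction z with
  | zero => omega
  | succ k ih =>
    rcases Nat.eq_zero_or_pos k with rfl | hk
    · simp
    · have := ih hk
      have : 4 ^ (k+1) = 4 * 4^k := by ring
      omega
lemma exists_concat {l : List ℕ} (h : l ≠ []) : ∃ L b, l = L ++ [b] := by
  induction l using List.reverseRecOn with
  | nil => exact absurd rfl h
  | append_singleton L b _ => exact ⟨L, b, rfl⟩

lemma perm_of_coe {l₁ l₂ : List ℕ} (h : (↑l₁ : Multiset ℕ) = ↑l₂) : List.Perm l₁ l₂ :=
  Multiset.coe_eq_coe.1 h

lemma coe_mrg (a b : List ℕ) : (↑(mrg a b) : Multiset ℕ) = ↑a + ↑b := by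
  have h := Multiset.coe_eq_coe.2 (mrg_perm a b)
  rw [h, ← Multiset.coe_add]

theorem partAux (N : ℕ)
    (IH : ∀ (A B : Finset ℕ) (α β : List ℕ), (A ∪ B).card ≤ N → Disjoint A B →
      Desc α → Desc β →
      (∀ x ∈ A ∪ B, ∀ y ∈ A ∪ B, x < y → 4^x < y) →
      (∀ z ∈ A ∪ B, 3 ≤ z) →
      (∀ z ∈ A ∪ B, α.length + β.length + z + 2 ≤ 4^z) →
      IsLarge (mrg α β) (A ∪ B) → IsLarge α A ∨ IsLarge β B)
    (A B : Finset ℕ) (α β : List ℕ)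
    (hcard : (A ∪ B).card ≤ N + 1) (hdisj : Disjoint A B)
    (hα : Desc α) (hβ : Desc β)
    (hsp : ∀ x ∈ A ∪ B, ∀ y ∈ A ∪ B, x < y → 4^x < y)
    (h3 : ∀ z ∈ A ∪ B, 3 ≤ z)
    (hinv : ∀ z ∈ A ∪ B, α.length + β.length + z + 2 ≤ 4^z)
    (hlarge : IsLarge (mrg α β) (A ∪ B))
    (hne : (A ∪ B).Nonempty)
    (hαne : α ≠ []) (hβne : β ≠ [])
    (hxB : (A ∪ B).min' hne ∈ B) :
    IsLarge α A ∨ IsLarge β B := by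
  classical
  set x := (A ∪ B).min' hne with hxdef
  have hxX : x ∈ A ∪ B := Finset.min'_mem _ _
  have hxmin : ∀ z ∈ A ∪ B, x ≤ z := fun z hz => Finset.min'_le _ z hz
  have hxA : x ∉ A := fun hA => (Finset.disjoint_left.1 hdisj hA) hxB
  obtain ⟨α', e, rfl⟩ := exists_concat hαne
  obtain ⟨β', d, rfl⟩ := exists_concat hβne
  have hXerase : (A ∪ B).erase x = A ∪ B.erase x := by
    rw [Finset.erase_union_distrib, Finset.erase_eq_of_notMem hxA]
  have hsubX' : A ∪ B.erase x ⊆ A ∪ B :=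
    Finset.union_subset_union (le_refl A) (Finset.erase_subset _ _)
  have hcard' : (A ∪ B.erase x).card ≤ N := by
    rw [← hXerase]
    have h1 := Finset.card_erase_of_mem hxX
    have hc1 : 1 ≤ (A ∪ B).card := Finset.card_pos.2 hne
    omega
  have hx3 : 3 ≤ x := h3 x hxX
  have hxinv := hinv x hxX
  simp only [List.length_append, List.length_singleton] at hxinv
  have hαmin : ∀ a ∈ α' ++ [e], e ≤ a := by
    intro a ha
    rcases List.mem_append.1 ha with h | h
    · exact desc_concat_min hα a h
    · simp only [List.mem_singleton] at h; omega
  have hβmin : ∀ b ∈ β' ++ [d], d ≤ b := by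
    intro b hb
    rcases List.mem_append.1 hb with h | h
    · exact desc_concat_min hβ b h
    · simp only [List.mem_singleton] at h; omega
  have hxlt : ∀ z ∈ A ∪ B.erase x, x < z := by
    intro z hz
    have hzX : z ∈ A ∪ B := hsubX' hz
    have hne' : z ≠ x := by
      rintro rfl
      rcases Finset.mem_union.1 hz with h | h
      · exact hxA h
      · exact (Finset.notMem_erase _ _) h
    exact lt_of_le_of_ne (hxmin z hzX) (Ne.symm hne')
  have hL' : listLarge (KSstep (mrg (α' ++ [e]) (β' ++ [d])) x)
      ((A ∪ B.erase x).sort (· ≤ ·)) := by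
    have h0 : listLarge (mrg (α' ++ [e]) (β' ++ [d])) ((A ∪ B).sort (· ≤ ·)) := hlarge
    rw [sort_min_cons hxX hxmin, listLarge_cons, hXerase] at h0
    exact h0
  have key : ∀ (γ : List ℕ), Desc γ → γ.length ≤ β'.length + x →
      KSstep (β' ++ [d]) x = γ →
      listLarge (mrg (α' ++ [e]) γ) ((A ∪ B.erase x).sort (· ≤ ·)) →
      IsLarge (α' ++ [e]) A ∨ IsLarge (β' ++ [d]) B := by
    intro γ hγdesc hγlen hγeq hγlarge
    have hres := IH A (B.erase x) (α' ++ [e]) γ hcard'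
      (hdisj.mono_right (Finset.erase_subset _ _)) hα hγdesc
      (fun u hu v hv huv => hsp u (hsubX' hu) v (hsubX' hv) huv)
      (fun z hz => h3 z (hsubX' hz))
      (by
        intro z hz
        have h4xz : 4^x < z := hsp x hxX z (hsubX' hz) (hxlt z hz)
        have h2z : 2*z + 2 ≤ 4^z := nat_two_mul_add_two_le (by
          have := h3 z (hsubX' hz); omega)
        simp only [List.length_append, List.length_singleton]
        omega)
      hγlarge
    rcases hres with h | h
    · exact Or.inl h
    · right
      have hxBmin : ∀ z ∈ B, x ≤ z := fun z hz => hxmin z (Finset.mem_union_right _ hz)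
      rw [isLarge_iff_erase_min hxB hxBmin, hγeq]
      exact h
  cases d with
  | zero =>
    have hml : mrg (α' ++ [e]) (β' ++ [0]) = mrg (α' ++ [e]) β' ++ [0] :=
      mrg_concat_small hα (desc_concat_left hβ) (by simp [Desc])
        (by intro u hu a _; simp at hu; omega)
        (by intro u hu b _; simp at hu; omega)
    apply key β' (desc_concat_left hβ) (by omega) (KSstep_append_zero _ _)
    rw [← KSstep_append_zero (mrg (α' ++ [e]) β') x, ← hml]
    exact hL'
  | succ s =>
    have hendγ : Desc (β' ++ List.replicate x s) := by
      apply desc_append (desc_concat_left hβ) (desc_replicate x s)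
      intro u hu v hv
      have h1 := hβmin u (List.mem_append_left _ hu)
      have h2 := List.eq_of_mem_replicate hv
      omega
    have hendlen : (β' ++ List.replicate x s).length ≤ β'.length + x := by simp
    by_cases hde : s + 1 ≤ e
    · have hml : mrg (α' ++ [e]) (β' ++ [s+1]) = mrg (α' ++ [e]) β' ++ [s+1] :=
        mrg_concat_small hα (desc_concat_left hβ) (by simp [Desc])
          (by intro u hu a ha; simp at hu; subst hu; exact le_trans hde (hαmin a ha))
          (by intro u hu b hb; simp at hu; subst hu
              exact hβmin b (List.mem_append_left _ hb))
      apply key (β' ++ List.replicate x s) hendγ hendlen (KSstep_append_succ _ _ _)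
      have hmrg2 : mrg (α' ++ [e]) (β' ++ List.replicate x s)
          = mrg (α' ++ [e]) β' ++ List.replicate x s := by
        apply mrg_concat_small hα (desc_concat_left hβ) (desc_replicate x s)
        · intro u hu a ha
          have h1 := List.eq_of_mem_replicate hu
          have h2 := hαmin a ha
          omega
        · intro u hu b hb
          have h1 := List.eq_of_mem_replicate hu
          have h2 := hβmin b (List.mem_append_left _ hb)
          omega
      rw [hmrg2, ← KSstep_append_succ (mrg (α' ++ [e]) β') s x, ← hml]
      exact hL'
    · -- e ≤ s : step forced on α; swap via reachability
      push_neg at hde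
      have hes : e ≤ s := by omega
      set αHI := α'.takeWhile (fun a => decide (s + 1 ≤ a)) with hαHI
      set αLO := α'.dropWhile (fun a => decide (s + 1 ≤ a)) with hαLO
      have hsplit : αHI ++ αLO = α' := List.takeWhile_append_dropWhile
      have hα'desc : Desc α' := desc_concat_left hα
      have hHIdesc : Desc αHI := List.Pairwise.sublist (List.takeWhile_sublist _) hα'desc
      have hLOdesc : Desc αLO := List.Pairwise.sublist (List.dropWhile_sublist _) hα'desc
      have hHIge : ∀ a ∈ αHI, s + 1 ≤ a := mem_takeWhile_ge (s+1)
      have hLOlt : ∀ a ∈ αLO, a < s + 1 := desc_dropWhile_lt hα'desc (s+1)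
      have hLOmem : ∀ a ∈ αLO, a ∈ α' := by
        intro a ha; rw [← hsplit]; exact List.mem_append_right _ ha
      have hLOge : ∀ a ∈ αLO, e ≤ a := fun a ha => desc_concat_min hα a (hLOmem a ha)
      set M := mrg β' αHI with hM
      have hMdesc : Desc M := mrg_sorted _ _
      have hMge : ∀ u ∈ M, s + 1 ≤ u := by
        intro u hu
        rcases List.mem_append.1 ((mrg_perm β' αHI).mem_iff.1 hu) with h | h
        · exact hβmin u (List.mem_append_left _ h)
        · exact hHIge u h
      have hLOcoe : (↑αHI : Multiset ℕ) + ↑αLO = ↑α' := by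
        rw [Multiset.coe_add]; exact congrArg _ hsplit
      -- source form : the result of the forced step
      have hsrc1 : mrg α' (β' ++ [s+1]) = (M ++ [s+1]) ++ αLO := by
        apply mrg_eq_of_perm
        · apply desc_append (desc_append hMdesc (by simp [Desc])
            (fun u hu v hv => by simp at hv; subst hv; exact hMge u hu)) hLOdesc
          intro u hu v hv
          rcases List.mem_append.1 hu with h | h
          · exact le_trans (le_of_lt (hLOlt v hv)) (hMge u h)
          · simp at h; subst h; exact le_of_lt (hLOlt v hv)
        · apply perm_of_coe
          simp only [hM, coe_mrg, ← Multiset.coe_add, ← hLOcoe]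
          abel
      -- target form
      have htgt : mrg (α' ++ [e]) (β' ++ List.replicate x s)
          = M ++ (List.replicate x s ++ (αLO ++ [e])) := by
        apply mrg_eq_of_perm
        · apply desc_append hMdesc
          · apply desc_append (desc_replicate x s)
            · apply desc_append hLOdesc (by simp [Desc])
                (fun u hu v hv => by simp at hv; subst hv; exact hLOge u hu)
            · intro u hu v hv
              have h1 := List.eq_of_mem_replicate hu
              rcases List.mem_append.1 hv with h | h
              · have := hLOlt v h; omega
              · simp at h; omega
          · intro u hu v hv
            have h1 := hMge u hu
            rcases List.mem_append.1 hv with h | h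
            · have := List.eq_of_mem_replicate h; omega
            · rcases List.mem_append.1 h with h' | h'
              · have := hLOlt v h'; omega
              · simp at h'; omega
        · apply perm_of_coe
          simp only [hM, coe_mrg, ← Multiset.coe_add, ← hLOcoe]
          abel
      have hdesctail : Desc (List.replicate x s ++ (αLO ++ [e])) := by
        apply desc_append (desc_replicate x s)
        · apply desc_append hLOdesc (by simp [Desc])
            (fun u hu v hv => by simp at hv; subst hv; exact hLOge u hu)
        · intro u hu v hv
          have h1 := List.eq_of_mem_replicate hu
          rcases List.mem_append.1 hv with h | h
          · have := hLOlt v h; omega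
          · simp at h; omega
      have hsrcm : mrg (α' ++ [e]) (β' ++ [s+1]) = ((M ++ [s+1]) ++ αLO) ++ [e] := by
        rw [mrg_comm]
        rw [mrg_concat_small hβ hα'desc (by simp [Desc])
          (by intro u hu b hb; simp at hu; subst hu
              have := hβmin b hb; omega)
          (by intro u hu a ha; simp at hu; subst hu; exact desc_concat_min hα a ha)]
        rw [mrg_comm, hsrc1]
      -- nonempty remainder
      have hne' : (A ∪ B.erase x).Nonempty := by
        by_contra hemp
        rw [Finset.not_nonempty_iff_eq_empty] at hemp
        rw [hemp] at hL'
        simp only [Finset.sort_empty] at hL'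
        rw [listLarge_nil, hsrcm] at hL'
        cases e with
        | zero => rw [KSstep_append_zero] at hL'; simp at hL'
        | succ t => rw [KSstep_append_succ] at hL'; simp at hL'
      set y := (A ∪ B.erase x).min' hne' with hydef
      have hyX' : y ∈ A ∪ B.erase x := Finset.min'_mem _ _
      have hxy : x < y := hxlt y hyX'
      have h4xy : 4^x < y := hsp x hxX y (hsubX' hyX') hxy
      have hy3 : 3 ≤ y := h3 y (hsubX' hyX')
      have hLOlen : αLO.length ≤ α'.length := (List.dropWhile_sublist _).length_le
      have hreach_src : Reach y (KSstep (mrg (α' ++ [e]) (β' ++ [s+1])) x) (M ++ [s+1]) := by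
        rw [hsrcm]
        cases e with
        | zero =>
          rw [KSstep_append_zero]
          exact Reach.pops _ _
        | succ t =>
          rw [KSstep_append_succ, List.append_assoc]
          exact Reach.pops _ _
      have hbuild : Reach y [s+1] (List.replicate x s ++ (αLO ++ [e])) := by
        apply Reach.build hdesctail
        · intro b hb
          rcases List.mem_append.1 hb with h | h
          · exact le_of_eq (List.eq_of_mem_replicate h)
          · rcases List.mem_append.1 h with h' | h'
            · have := hLOlt b h'; omega
            · simp at h'; omega
        · simp only [List.length_append, List.length_replicate, List.length_singleton]
          omega
        · omega
      have hreach_full : Reach y (KSstep (mrg (α' ++ [e]) (β' ++ [s+1])) x)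
          (M ++ (List.replicate x s ++ (αLO ++ [e]))) :=
        hreach_src.trans (hbuild.append_left M)
      have hms : listLarge (M ++ (List.replicate x s ++ (αLO ++ [e])))
          ((A ∪ B.erase x).sort (· ≤ ·)) := by
        apply MS ((A ∪ B.erase x).sort (· ≤ ·)) (Finset.pairwise_sort _ _) y _ _
          (fun z hz => Finset.min'_le _ z ((Finset.mem_sort _).1 hz)) hreach_full hL'
      apply key (β' ++ List.replicate x s) hendγ hendlen (KSstep_append_succ _ _ _)
      rw [htgt]
      exact hms
theorem partitionN : ∀ (N : ℕ) (A B : Finset ℕ) (α β : List ℕ),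
    (A ∪ B).card ≤ N → Disjoint A B → Desc α → Desc β →
    (∀ x ∈ A ∪ B, ∀ y ∈ A ∪ B, x < y → 4^x < y) →
    (∀ z ∈ A ∪ B, 3 ≤ z) →
    (∀ z ∈ A ∪ B, α.length + β.length + z + 2 ≤ 4^z) →
    IsLarge (mrg α β) (A ∪ B) → IsLarge α A ∨ IsLarge β B := by
  intro N
  induction N with
  | zero =>
    intro A B α β hcard _ _ _ _ _ _ hlarge
    have hempty : A ∪ B = ∅ := Finset.card_eq_zero.1 (le_antisymm hcard (Nat.zero_le _))
    have hmrg : mrg α β = [] := by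
      have h : listLarge (mrg α β) ((A ∪ B).sort (· ≤ ·)) := hlarge
      rw [hempty, Finset.sort_empty, listLarge_nil] at h
      exact h
    obtain ⟨ha, _⟩ := mrg_eq_nil_iff.1 hmrg
    subst ha
    exact Or.inl (foldl_KSstep_nil _)
  | succ N IHN =>
    intro A B α β hcard hdisj hα hβ hsp h3 hinv hlarge
    by_cases hαe : α = []
    · subst hαe; exact Or.inl (foldl_KSstep_nil _)
    by_cases hβe : β = []
    · subst hβe; exact Or.inr (foldl_KSstep_nil _)
    rcases Finset.eq_empty_or_nonempty (A ∪ B) with hem | hne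
    · exfalso
      have hmrg : mrg α β = [] := by
        have h : listLarge (mrg α β) ((A ∪ B).sort (· ≤ ·)) := hlarge
        rw [hem, Finset.sort_empty, listLarge_nil] at h
        exact h
      exact hαe (mrg_eq_nil_iff.1 hmrg).1
    rcases Finset.mem_union.1 (Finset.min'_mem (A ∪ B) hne) with hA | hB
    · have hcomm : B ∪ A = A ∪ B := Finset.union_comm B A
      have hne2 : (B ∪ A).Nonempty := by rwa [hcomm]
      have hres := partAux N IHN B A β α (by rwa [hcomm]) hdisj.symm hβ hα
        (by rw [hcomm]; exact hsp) (by rw [hcomm]; exact h3)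
        (by rw [hcomm]; intro z hz; have := hinv z hz; omega)
        (by rwa [hcomm, mrg_comm β α]) hne2 hβe hαe
        (by simp only [hcomm]; exact hA)
      exact hres.symm
    · exact partAux N IHN A B α β hcard hdisj hα hβ hsp h3 hinv hlarge hne hαe hβe hB

theorem partitionRep {A B : Finset ℕ} {a b n : ℕ}
    (hdisj : Disjoint A B)
    (hsp : ∀ x ∈ A ∪ B, ∀ y ∈ A ∪ B, x < y → 4^x < y)
    (h3 : ∀ z ∈ A ∪ B, 3 ≤ z)
    (hinv : ∀ z ∈ A ∪ B, a + b + z + 2 ≤ 4^z)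
    (hlarge : IsLarge (List.replicate (a+b) n) (A ∪ B)) :
    IsLarge (List.replicate a n) A ∨ IsLarge (List.replicate b n) B := by
  apply partitionN (A ∪ B).card A B _ _ le_rfl hdisj (desc_replicate a n) (desc_replicate b n)
    hsp h3
  · intro z hz
    have := hinv z hz
    simpa using this
  · rwa [mrg_replicate]

lemma isLarge_empty_iff (γ : List ℕ) : IsLarge γ (∅ : Finset ℕ) ↔ γ = [] := by
  unfold IsLarge
  rw [Finset.sort_empty]
  rfl

lemma extract_block {Y : Finset ℕ} {m n : ℕ} (hm : 1 ≤ m)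
    (hsp : ∀ x ∈ Y, ∀ y ∈ Y, x < y → 4^x < y)
    (h3 : ∀ z ∈ Y, 3 ≤ z)
    (hinv : ∀ z ∈ Y, m + z + 2 ≤ 4^z)
    (hlarge : IsLarge (List.replicate m n) Y) :
    ∃ Z ⊆ Y, IsLarge [n] Z := by
  rcases eq_or_lt_of_le hm with hm1 | hm2
  · refine ⟨Y, Finset.Subset.refl Y, ?_⟩
    rw [← hm1] at hlarge
    simpa using hlarge
  · have hEY : (∅ : Finset ℕ) ∪ Y = Y := Finset.empty_union Y
    have hres := partitionRep (A := ∅) (B := Y) (a := m - 1) (b := 1) (n := n)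
      (Finset.disjoint_empty_left Y)
      (by rw [hEY]; exact hsp) (by rw [hEY]; exact h3)
      (by rw [hEY]; intro z hz; have := hinv z hz; omega)
      (by rw [hEY, show m - 1 + 1 = m by omega]; exact hlarge)
    rcases hres with h | h
    · exfalso
      rw [isLarge_empty_iff] at h
      have : m - 1 = 0 := by simpa using h
      omega
    · exact ⟨Y, Finset.Subset.refl Y, by simpa using h⟩

lemma fin_two_eq (v w : Fin 2) (hv : v ≠ 0) (hw : w ≠ 0) : v = w := by
  fin_cases v <;> fin_cases w <;> simp_all

lemma loop (n : ℕ) (P : ℕ → ℕ → Fin 2) :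
    ∀ (W : Finset ℕ) (Y : Finset ℕ) (m : ℕ),
    (∀ x ∈ Y, ∀ y ∈ Y, x < y → 4^x < y) → (∀ z ∈ Y, 3 ≤ z) →
    (∀ z ∈ Y, m + z + 2 ≤ 4^z) →
    2^W.card ≤ m → IsLarge (List.replicate m n) Y →
    ∃ Z ⊆ Y, IsLarge [n] Z ∧ ∀ w ∈ W, ∀ y ∈ Z, ∀ y' ∈ Z, P y w = P y' w := by
  intro W
  induction W using Finset.induction_on with
  | empty =>
    intro Y m hsp h3 hinv hpow hlarge
    obtain ⟨Z, hZY, hZ⟩ := extract_block (by simpa using hpow) hsp h3 hinv hlarge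
    exact ⟨Z, hZY, hZ, by simp⟩
  | @insert w W' hw ih =>
    intro Y m hsp h3 hinv hpow hlarge
    classical
    set A := Y.filter (fun y => P y w = 0) with hA
    set B := Y.filter (fun y => ¬ (P y w = 0)) with hB
    have hunion : A ∪ B = Y := Finset.filter_union_filter_not_eq _ Y
    have hdisj : Disjoint A B := Finset.disjoint_filter_filter_not Y Y _
    have hcardW : (insert w W').card = W'.card + 1 := Finset.card_insert_of_notMem hw
    rw [hcardW] at hpow
    have hm2 : 2^W'.card * 2 ≤ m := by
      have : 2^(W'.card + 1) = 2^W'.card * 2 := by ring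
      omega
    have hhalf : 2^W'.card ≤ m / 2 := Nat.le_div_iff_mul_le (by norm_num) |>.2 hm2
    have hab : (m - m/2) + m/2 = m := by omega
    have hres := partitionRep (A := A) (B := B) (a := m - m/2) (b := m/2) (n := n) hdisj
      (by rw [hunion]; exact hsp) (by rw [hunion]; exact h3)
      (by rw [hunion]; intro z hz; have := hinv z hz; omega)
      (by rw [hunion, hab]; exact hlarge)
    have hm1le : m - m/2 ≤ m := by omega
    have hm2le : m/2 ≤ m := by omega
    have hmain : ∀ (C : Finset ℕ) (m₁ : ℕ), C ⊆ Y → m₁ ≤ m → 2^W'.card ≤ m₁ →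
        IsLarge (List.replicate m₁ n) C →
        (∀ y ∈ C, ∀ y' ∈ C, P y w = P y' w) →
        ∃ Z ⊆ Y, IsLarge [n] Z ∧
          ∀ w' ∈ insert w W', ∀ y ∈ Z, ∀ y' ∈ Z, P y w' = P y' w' := by
      intro C m₁ hCY hm₁ hpow₁ hlarge₁ hhom
      obtain ⟨Z, hZC, hZ, hZhom⟩ := ih C m₁
        (fun u hu v hv huv => hsp u (hCY hu) v (hCY hv) huv)
        (fun z hz => h3 z (hCY hz))
        (fun z hz => by have := hinv z (hCY hz); omega)
        hpow₁ hlarge₁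
      refine ⟨Z, hZC.trans hCY, hZ, ?_⟩
      intro w' hw' y hy y' hy'
      rcases Finset.mem_insert.1 hw' with rfl | hw'
      · exact hhom y (hZC hy) y' (hZC hy')
      · exact hZhom w' hw' y hy y' hy'
    rcases hres with h | h
    · apply hmain A (m - m/2) (Finset.filter_subset _ _) hm1le (by omega) h
      intro y hy y' hy'
      have h1 := (Finset.mem_filter.1 hy).2
      have h2 := (Finset.mem_filter.1 hy').2
      rw [h1, h2]
    · apply hmain B (m/2) (Finset.filter_subset _ _) hm2le hhalf h
      intro y hy y' hy'
      have h1 := (Finset.mem_filter.1 hy).2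
      have h2 := (Finset.mem_filter.1 hy').2
      exact fin_two_eq _ _ h1 h2

/-- Let `X ⊆ ℕ` be a finite set which is `ω^{n+1}`-large and exp-sparse, and let
`c ∈ ℕ` with `4^c ≤ min X`. For any finite `W ⊆ ℕ` with `|W| ≤ c` and `max X < min W`,
and for any colouring `P : [X ∪ W]² → 2`, there exists `Y ⊆ X` such that `Y` is
`ω^n`-large and `P(y, w) = P(y', w)` for all `w ∈ W` and all `y, y' ∈ Y`. -/
theorem stabilize_from_above (n : ℕ) (X : Finset ℕ)
    (hX : IsLarge [n + 1] X) (hs : ExpSparse X)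
    (c : ℕ) (hc : ∀ x ∈ X, 4 ^ c ≤ x)
    (W : Finset ℕ) (hWcard : W.card ≤ c) (hXW : ∀ x ∈ X, ∀ w ∈ W, x < w)
    (P : ℕ → ℕ → Fin 2) :
    ∃ Y ⊆ X, IsLarge [n] Y ∧ ∀ w ∈ W, ∀ y ∈ Y, ∀ y' ∈ Y, P y w = P y' w := by
  obtain ⟨h3X, hspX⟩ := hs
  have hXne : X.Nonempty := by
    rcases Finset.eq_empty_or_nonempty X with rfl | h
    · exfalso
      have : listLarge [n+1] ((∅ : Finset ℕ).sort (· ≤ ·)) := hX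
      rw [Finset.sort_empty, listLarge_nil] at this
      simp at this
    · exact h
  set x₀ := X.min' hXne with hx₀
  have hx₀X : x₀ ∈ X := Finset.min'_mem _ _
  have hx₀min : ∀ z ∈ X, x₀ ≤ z := fun z hz => Finset.min'_le _ z hz
  have hx₀c : 4^c ≤ x₀ := hc x₀ hx₀X
  have hlarge' : IsLarge (List.replicate x₀ n) (X.erase x₀) := by
    have h := (isLarge_iff_erase_min hx₀X hx₀min [n+1]).1 hX
    simpa [IsLarge, listLarge] using h
  have herase : X.erase x₀ ⊆ X := Finset.erase_subset _ _
  obtain ⟨Z, hZX', hZ, hhom⟩ := loop n P W (X.erase x₀) x₀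
    (fun u hu v hv huv => hspX u (herase hu) v (herase hv) huv)
    (fun z hz => h3X z (herase hz))
    (by
      intro z hz
      have hz3 : 3 ≤ z := h3X z (herase hz)
      have hzx : x₀ ≤ z := hx₀min z (herase hz)
      have := nat_two_mul_add_two_le (show 1 ≤ z by omega)
      omega)
    (by
      calc 2^W.card ≤ 2^c := Nat.pow_le_pow_right (by norm_num) hWcard
        _ ≤ 4^c := Nat.pow_le_pow_left (by norm_num) c
        _ ≤ x₀ := hx₀c)
    hlarge'
  exact ⟨Z, hZX'.trans herase, hZ, hhom⟩
end
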